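/- For every real u > 0 and ε ∈ (-1, -1/2), with f_ε(u) = (1/Γ(ε+1)) ∫₀^∞ x^{ε-1} e^{-x} ln(xu+1) dx, the recurrence f_{ε+1}(u) = (ε/(ε+1)) f_ε(u) + (1/(ε+1)) u f_ε'(u) holds. -/

import Mathlib

open MeasureTheory Real

/-- `f_e(u) = (1/Γ(e+1)) ∫₀^∞ x^{e-1} e^{-x} ln(xu+1) dx`. -/
noncomputable def f (e : ℝ) (u : ℝ) : ℝ :=
  (1 / Real.Gamma (e + 1)) *
    ∫ x in Set.Ioi (0:ℝ), x ^ (e - 1) * Real.exp (-x) * Real.log (x * u + 1)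

namespace Stmt19Aux

lemma log_bound {u x : ℝ} (hu : 0 < u) (hx : 0 ≤ x) : ‖Real.log (x * u + 1)‖ ≤ x * u := by
  have h1 : (1 : ℝ) ≤ x * u + 1 := by nlinarith
  have h0 : 0 ≤ Real.log (x * u + 1) := Real.log_nonneg h1
  rw [Real.norm_eq_abs, abs_of_nonneg h0]
  have := Real.log_le_sub_one_of_pos (by linarith : (0:ℝ) < x * u + 1)
  linarith

lemma meas_log {u : ℝ} (hu : 0 < u) (a : ℝ) :
    AEStronglyMeasurable (fun x : ℝ => x ^ a * Real.exp (-x) * Real.log (x * u + 1))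
      (volume.restrict (Set.Ioi 0)) := by
  refine ContinuousOn.aestronglyMeasurable ?_ measurableSet_Ioi
  intro x hx
  apply ContinuousAt.continuousWithinAt
  have hx0 : (0:ℝ) < x := hx
  have h1 : ContinuousAt (fun x : ℝ => x ^ a) x :=
    Real.continuousAt_rpow_const x a (Or.inl hx0.ne')
  have h2 : ContinuousAt (fun x : ℝ => Real.exp (-x)) x := by fun_prop
  have h3 : ContinuousAt (fun x : ℝ => Real.log (x * u + 1)) x := by
    apply ContinuousAt.log (by fun_prop)
    nlinarith
  exact (h1.mul h2).mul h3

lemma meas_frac {u : ℝ} (hu : 0 < u) (a : ℝ) :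
    AEStronglyMeasurable (fun x : ℝ => x ^ a * Real.exp (-x) / (x * u + 1))
      (volume.restrict (Set.Ioi 0)) := by
  refine ContinuousOn.aestronglyMeasurable ?_ measurableSet_Ioi
  intro x hx
  apply ContinuousAt.continuousWithinAt
  have hx0 : (0:ℝ) < x := hx
  have h1 : ContinuousAt (fun x : ℝ => x ^ a) x :=
    Real.continuousAt_rpow_const x a (Or.inl hx0.ne')
  have h2 : ContinuousAt (fun x : ℝ => Real.exp (-x)) x := by fun_prop
  exact (h1.mul h2).div (by fun_prop) (by nlinarith)

lemma int_log {u : ℝ} (hu : 0 < u) {a : ℝ} (ha : -2 < a) :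
    IntegrableOn (fun x : ℝ => x ^ a * Real.exp (-x) * Real.log (x * u + 1))
      (Set.Ioi 0) := by
  have hG : IntegrableOn (fun x : ℝ => u * (Real.exp (-x) * x ^ ((a + 2) - 1)))
      (Set.Ioi 0) :=
    (Real.GammaIntegral_convergent (by linarith : (0:ℝ) < a + 2)).const_mul u
  refine hG.mono' (meas_log hu a) ?_
  filter_upwards [ae_restrict_mem measurableSet_Ioi] with x hx
  have hx0 : (0:ℝ) < x := hx
  have hxa : (0:ℝ) ≤ x ^ a := Real.rpow_nonneg hx0.le a
  have hlog := log_bound hu hx0.le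
  have h1 : ‖x ^ a * Real.exp (-x) * Real.log (x * u + 1)‖
      = x ^ a * Real.exp (-x) * ‖Real.log (x * u + 1)‖ := by
    rw [norm_mul, norm_mul, Real.norm_eq_abs, Real.norm_eq_abs, abs_of_nonneg hxa,
      abs_of_pos (Real.exp_pos _)]
  rw [h1]
  have h2 : x ^ a * Real.exp (-x) * ‖Real.log (x * u + 1)‖
      ≤ x ^ a * Real.exp (-x) * (x * u) := by
    apply mul_le_mul_of_nonneg_left hlog
    positivity
  have h3 : x ^ a * x = x ^ (a + 2 - 1) := by
    rw [show a + 2 - 1 = a + 1 by ring, Real.rpow_add_one hx0.ne']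
  calc x ^ a * Real.exp (-x) * ‖Real.log (x * u + 1)‖
      ≤ x ^ a * Real.exp (-x) * (x * u) := h2
    _ = u * (Real.exp (-x) * (x ^ a * x)) := by ring
    _ = u * (Real.exp (-x) * x ^ (a + 2 - 1)) := by rw [h3]

lemma int_frac {u : ℝ} (hu : 0 < u) {a : ℝ} (ha : -1 < a) :
    IntegrableOn (fun x : ℝ => x ^ a * Real.exp (-x) / (x * u + 1)) (Set.Ioi 0) := by
  have hG : IntegrableOn (fun x : ℝ => Real.exp (-x) * x ^ ((a + 1) - 1)) (Set.Ioi 0) :=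
    Real.GammaIntegral_convergent (by linarith : (0:ℝ) < a + 1)
  refine hG.mono' (meas_frac hu a) ?_
  filter_upwards [ae_restrict_mem measurableSet_Ioi] with x hx
  have hx0 : (0:ℝ) < x := hx
  have hd : (1:ℝ) ≤ x * u + 1 := by nlinarith
  have hxa : (0:ℝ) ≤ x ^ a := Real.rpow_nonneg hx0.le a
  have hnum : (0:ℝ) ≤ x ^ a * Real.exp (-x) := by positivity
  rw [Real.norm_eq_abs, abs_of_nonneg (div_nonneg hnum (by linarith))]
  have : x ^ a * Real.exp (-x) / (x * u + 1) ≤ x ^ a * Real.exp (-x) :=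
    div_le_self hnum hd
  simpa [add_sub_cancel_right, mul_comm] using this

end Stmt19Aux

open Stmt19Aux in
theorem stmt19 (u : ℝ) (hu : 0 < u) (ε : ℝ) (hε : ε ∈ Set.Ioo (-1 : ℝ) (-1/2)) :
    f (ε + 1) u = (ε / (ε + 1)) * f ε u + (1 / (ε + 1)) * u * deriv (f ε) u := by
  obtain ⟨hε1, hε2⟩ := hε
  have hε2' : ε < -1/2 := hε2
  set J1 : ℝ := ∫ x in Set.Ioi (0:ℝ), x ^ (ε - 1) * Real.exp (-x) * Real.log (x * u + 1)
    with hJ1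
  set J2 : ℝ := ∫ x in Set.Ioi (0:ℝ), x ^ ε * Real.exp (-x) * Real.log (x * u + 1) with hJ2
  set J3 : ℝ := ∫ x in Set.Ioi (0:ℝ), x ^ ε * Real.exp (-x) / (x * u + 1) with hJ3
  have hΓpos : 0 < Real.Gamma (ε + 1) := Real.Gamma_pos_of_pos (by linarith)
  have hΓ2 : Real.Gamma (ε + 1 + 1) = (ε + 1) * Real.Gamma (ε + 1) :=
    Real.Gamma_add_one (by linarith)
  -- Differentiation under the integral sign
  have hderivF : HasDerivAt (f ε) ((1 / Real.Gamma (ε + 1)) * J3) u := by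
    have key : HasDerivAt
        (fun v : ℝ => ∫ x in Set.Ioi (0:ℝ), x ^ (ε - 1) * Real.exp (-x) * Real.log (x * v + 1))
        J3 u := by
      have h := hasDerivAt_integral_of_dominated_loc_of_deriv_le (μ := volume.restrict (Set.Ioi 0))
        (F := fun v x => x ^ (ε - 1) * Real.exp (-x) * Real.log (x * v + 1))
        (F' := fun v x => x ^ ε * Real.exp (-x) / (x * v + 1))
        (x₀ := u) (bound := fun x => Real.exp (-x) * x ^ ((ε + 1) - 1))
        (Metric.ball_mem_nhds u (half_pos hu))
        ?_
        (int_log hu (by linarith : (-2:ℝ) < ε - 1))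
        (meas_frac hu ε)
        ?_ (Real.GammaIntegral_convergent (by linarith : (0:ℝ) < ε + 1)) ?_
      · exact h.2
      · filter_upwards [eventually_gt_nhds hu] with v hv
        exact meas_log hv (ε - 1)
      · filter_upwards [ae_restrict_mem measurableSet_Ioi] with x hx v hv
        have hx0 : (0:ℝ) < x := hx
        have hv0 : 0 < v := by
          have h := abs_lt.1 (mem_ball_iff_norm.1 hv)
          linarith [h.1]
        have hd : (1:ℝ) ≤ x * v + 1 := by nlinarith
        have hxa : (0:ℝ) ≤ x ^ ε := Real.rpow_nonneg hx0.le ε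
        have hnum : (0:ℝ) ≤ x ^ ε * Real.exp (-x) := by positivity
        rw [Real.norm_eq_abs, abs_of_nonneg (div_nonneg hnum (by linarith))]
        have : x ^ ε * Real.exp (-x) / (x * v + 1) ≤ x ^ ε * Real.exp (-x) :=
          div_le_self hnum hd
        simpa [add_sub_cancel_right, mul_comm] using this
      · filter_upwards [ae_restrict_mem measurableSet_Ioi] with x hx v hv
        have hx0 : (0:ℝ) < x := hx
        have hv0 : 0 < v := by
          have h := abs_lt.1 (mem_ball_iff_norm.1 hv)
          linarith [h.1]
        have hpos : (0:ℝ) < x * v + 1 := by nlinarith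
        have hlin : HasDerivAt (fun w : ℝ => x * w + 1) x v := by
          simpa using ((hasDerivAt_id v).const_mul x).add_const 1
        have hlog : HasDerivAt (fun w : ℝ => Real.log (x * w + 1)) (x / (x * v + 1)) v :=
          hlin.log hpos.ne'
        have hD := hlog.const_mul (x ^ (ε - 1) * Real.exp (-x))
        refine hD.congr_deriv ?_
        have hxsub : x ^ (ε - 1) = x ^ ε / x := by
          rw [Real.rpow_sub hx0, Real.rpow_one]
        rw [hxsub]
        field_simp
    have hfeq : f ε = fun v : ℝ => (1 / Real.Gamma (ε + 1)) *
        ∫ x in Set.Ioi (0:ℝ), x ^ (ε - 1) * Real.exp (-x) * Real.log (x * v + 1) := rfl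
    rw [hfeq]
    exact key.const_mul _
  -- integrability of the three pieces
  have hI1 : IntegrableOn (fun x : ℝ => x ^ (ε - 1) * Real.exp (-x) * Real.log (x * u + 1))
      (Set.Ioi 0) := int_log hu (by linarith)
  have hI2 : IntegrableOn (fun x : ℝ => x ^ ε * Real.exp (-x) * Real.log (x * u + 1))
      (Set.Ioi 0) := int_log hu (by linarith)
  have hI3 : IntegrableOn (fun x : ℝ => x ^ ε * Real.exp (-x) / (x * u + 1)) (Set.Ioi 0) :=
    int_frac hu (by linarith)
  -- FTC identity : J2 = ε * J1 + u * J3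
  have hkey : J2 = ε * J1 + u * J3 := by
    have hg0 : (fun x : ℝ => x ^ ε * Real.exp (-x) * Real.log (x * u + 1)) 0 = 0 := by
      simp [Real.zero_rpow (show ε ≠ 0 by linarith)]
    have hderiv : ∀ x ∈ Set.Ioi (0:ℝ),
        HasDerivAt (fun x : ℝ => x ^ ε * Real.exp (-x) * Real.log (x * u + 1))
          (ε * (x ^ (ε - 1) * Real.exp (-x) * Real.log (x * u + 1))
            - x ^ ε * Real.exp (-x) * Real.log (x * u + 1)
            + u * (x ^ ε * Real.exp (-x) / (x * u + 1))) x := by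
      intro x hx
      have hx0 : (0:ℝ) < x := hx
      have hpos : (0:ℝ) < x * u + 1 := by nlinarith
      have h1 : HasDerivAt (fun y : ℝ => y ^ ε) (ε * x ^ (ε - 1)) x := by
        simpa using Real.hasDerivAt_rpow_const (p := ε) (Or.inl hx0.ne')
      have h2 : HasDerivAt (fun y : ℝ => Real.exp (-y)) (-Real.exp (-x)) x := by
        simpa using (hasDerivAt_neg x).exp
      have h3 : HasDerivAt (fun y : ℝ => Real.log (y * u + 1)) (u / (x * u + 1)) x := by
        have hlin : HasDerivAt (fun y : ℝ => y * u + 1) u x := by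
          simpa using ((hasDerivAt_id x).mul_const u).add_const 1
        exact hlin.log hpos.ne'
      have hD := (h1.mul h2).mul h3
      refine hD.congr_deriv ?_
      simp only [Pi.mul_apply]
      ring
    have hint : IntegrableOn (fun x : ℝ =>
        ε * (x ^ (ε - 1) * Real.exp (-x) * Real.log (x * u + 1))
          - x ^ ε * Real.exp (-x) * Real.log (x * u + 1)
          + u * (x ^ ε * Real.exp (-x) / (x * u + 1))) (Set.Ioi 0) :=
      ((hI1.const_mul ε).sub hI2).add (hI3.const_mul u)
    have hcont : ContinuousWithinAt
        (fun x : ℝ => x ^ ε * Real.exp (-x) * Real.log (x * u + 1)) (Set.Ici 0) 0 := by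
      rw [ContinuousWithinAt]
      have h00 : (0:ℝ) ^ ε * Real.exp (-0) * Real.log (0 * u + 1) = 0 := by
        simp [Real.zero_rpow (show ε ≠ 0 by linarith)]
      rw [h00]
      apply squeeze_zero_norm' (a := fun x : ℝ => u * x ^ (ε + 1))
      · filter_upwards [self_mem_nhdsWithin] with x (hx : (0:ℝ) ≤ x)
        rcases eq_or_lt_of_le hx with h | hx0
        · simp [← h, Real.zero_rpow (show ε ≠ 0 by linarith),
            Real.zero_rpow (show ε + 1 ≠ 0 by linarith)]
        have hxa : (0:ℝ) ≤ x ^ ε := Real.rpow_nonneg hx0.le ε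
        have hlog := log_bound hu hx0.le
        have hexp : Real.exp (-x) ≤ 1 := Real.exp_le_one_iff.mpr (by linarith)
        have h1 : ‖x ^ ε * Real.exp (-x) * Real.log (x * u + 1)‖
            = x ^ ε * Real.exp (-x) * ‖Real.log (x * u + 1)‖ := by
          rw [norm_mul, norm_mul, Real.norm_eq_abs, Real.norm_eq_abs, abs_of_nonneg hxa,
            abs_of_pos (Real.exp_pos _)]
        rw [h1]
        have hx1 : x ^ ε * x = x ^ (ε + 1) := by
          rw [Real.rpow_add_one hx0.ne']
        calc x ^ ε * Real.exp (-x) * ‖Real.log (x * u + 1)‖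
            ≤ x ^ ε * 1 * (x * u) := by
              apply mul_le_mul (by nlinarith [Real.exp_pos (-x)]) hlog (norm_nonneg _)
              positivity
          _ = u * (x ^ ε * x) := by ring
          _ = u * x ^ (ε + 1) := by rw [hx1]
      · have hc : Filter.Tendsto (fun x : ℝ => u * x ^ (ε + 1)) (nhdsWithin 0 (Set.Ici 0))
            (nhds (u * (0:ℝ) ^ (ε + 1))) := by
          apply ContinuousWithinAt.const_smul (c := u)
          exact (Real.continuousAt_rpow_const 0 (ε + 1) (Or.inr (by linarith))).continuousWithinAt
        have h01 : u * (0:ℝ) ^ (ε + 1) = 0 := by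
          simp [Real.zero_rpow (show ε + 1 ≠ 0 by linarith)]
        rwa [h01] at hc
    have htop : Filter.Tendsto (fun x : ℝ => x ^ ε * Real.exp (-x) * Real.log (x * u + 1))
        Filter.atTop (nhds 0) := by
      apply squeeze_zero_norm' (a := fun x : ℝ => u * (x * Real.exp (-x)))
      · filter_upwards [Filter.eventually_ge_atTop (1:ℝ)] with x hx1
        have hx0 : (0:ℝ) < x := by linarith
        have hxa : x ^ ε ≤ 1 :=
          Real.rpow_le_one_of_one_le_of_nonpos hx1 (by linarith)
        have hxa0 : (0:ℝ) ≤ x ^ ε := Real.rpow_nonneg hx0.le ε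
        have hlog := log_bound hu hx0.le
        have h1 : ‖x ^ ε * Real.exp (-x) * Real.log (x * u + 1)‖
            = x ^ ε * Real.exp (-x) * ‖Real.log (x * u + 1)‖ := by
          rw [norm_mul, norm_mul, Real.norm_eq_abs, Real.norm_eq_abs, abs_of_nonneg hxa0,
            abs_of_pos (Real.exp_pos _)]
        rw [h1]
        calc x ^ ε * Real.exp (-x) * ‖Real.log (x * u + 1)‖
            ≤ 1 * Real.exp (-x) * (x * u) := by
              apply mul_le_mul (by nlinarith [Real.exp_pos (-x)]) hlog (norm_nonneg _)
              positivity
          _ = u * (x * Real.exp (-x)) := by ring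
      · have h := Real.tendsto_pow_mul_exp_neg_atTop_nhds_zero 1
        have h' : Filter.Tendsto (fun x : ℝ => x * Real.exp (-x)) Filter.atTop (nhds 0) := by
          simpa using h
        simpa using h'.const_mul u
    have hFTC : (∫ x in Set.Ioi (0:ℝ),
        (ε * (x ^ (ε - 1) * Real.exp (-x) * Real.log (x * u + 1))
          - x ^ ε * Real.exp (-x) * Real.log (x * u + 1)
          + u * (x ^ ε * Real.exp (-x) / (x * u + 1))))
        = 0 - (fun x : ℝ => x ^ ε * Real.exp (-x) * Real.log (x * u + 1)) 0 :=
      integral_Ioi_of_hasDerivAt_of_tendsto hcont hderiv hint htop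
    rw [hg0, sub_zero] at hFTC
    have hsub : IntegrableOn (fun x : ℝ =>
        ε * (x ^ (ε - 1) * Real.exp (-x) * Real.log (x * u + 1))
          - x ^ ε * Real.exp (-x) * Real.log (x * u + 1)) (Set.Ioi 0) :=
      (hI1.const_mul ε).sub hI2
    have hcm1 : IntegrableOn (fun x : ℝ =>
        ε * (x ^ (ε - 1) * Real.exp (-x) * Real.log (x * u + 1))) (Set.Ioi 0) :=
      hI1.const_mul ε
    have hcm3 : IntegrableOn (fun x : ℝ =>
        u * (x ^ ε * Real.exp (-x) / (x * u + 1))) (Set.Ioi 0) :=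
      hI3.const_mul u
    rw [integral_add hsub hcm3, integral_sub hcm1 hI2,
      integral_const_mul, integral_const_mul] at hFTC
    rw [hJ1, hJ2, hJ3]
    linarith [hFTC]
  -- Final computation
  have hd : deriv (f ε) u = (1 / Real.Gamma (ε + 1)) * J3 := hderivF.deriv
  have hfε : f ε u = (1 / Real.Gamma (ε + 1)) * J1 := rfl
  have hfε1 : f (ε + 1) u = (1 / Real.Gamma (ε + 1 + 1)) * J2 := by
    rw [f, hJ2]
    simp only [add_sub_cancel_right]
  rw [hfε1, hfε, hd, hΓ2, hkey]
  have h1 : ε + 1 ≠ 0 := by linarith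
  field_simp
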